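/- Let θ ∈ (0,1) and λ ∈ (0,1]. For every g ∈ ℝ, |Ψ(g) − (1−λ)·g| ≤ g²/8. Equivalently, writing Ψ(g) = (1−λ)·g + r(g), the remainder satisfies the global bound |r(g)| ≤ g²/8, so the one-block gap update g_{n+1} = Ψ(g_n) + ε_{n+1} linearizes to g_{n+1} = (1−λ)·g_n + r(g_n) + ε_{n+1} with |r(g_n)| ≤ g_n²/8. -/

import Mathlib

open Real

private lemma key (s : ℝ) (hs0 : 0 < s) (hs1 : s ≤ 1) (t : ℝ) :
    |Real.log (1 - s + s * Real.exp t) - s * t| ≤ t ^ 2 / 8 := by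
  have Dpos : ∀ u : ℝ, 0 < 1 - s + s * Real.exp u := by
    intro u
    have := (Real.exp_pos u)
    nlinarith
  -- lower bound: s*t ≤ log D t  (Jensen)
  have lower : s * t ≤ Real.log (1 - s + s * Real.exp t) := by
    rw [Real.le_log_iff_exp_le (Dpos t)]
    have := convexOn_exp.2 (Set.mem_univ (0:ℝ)) (Set.mem_univ t)
      (by linarith : (0:ℝ) ≤ 1 - s) hs0.le (by ring)
    simpa using this
  -- upper bound: log D t ≤ s*t + t^2/8
  set G : ℝ → ℝ := fun u => s * u + u ^ 2 / 8 - Real.log (1 - s + s * Real.exp u) with hGdef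
  set G1 : ℝ → ℝ := fun u => s + u / 4 - s * Real.exp u / (1 - s + s * Real.exp u) with hG1def
  have hD : ∀ u : ℝ, HasDerivAt (fun v => 1 - s + s * Real.exp v) (s * Real.exp u) u := by
    intro u
    exact ((Real.hasDerivAt_exp u).const_mul s).const_add (1 - s)
  have hG : ∀ u : ℝ, HasDerivAt G (G1 u) u := by
    intro u
    have hlog : HasDerivAt (fun v => Real.log (1 - s + s * Real.exp v))
        (s * Real.exp u / (1 - s + s * Real.exp u)) u := (hD u).log (Dpos u).ne'
    have h1 : HasDerivAt (fun v : ℝ => s * v + v ^ 2 / 8)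
        (s * 1 + 2 * u ^ 1 / 8) u :=
      ((hasDerivAt_id u).const_mul s).add ((hasDerivAt_pow 2 u).div_const 8)
    have := h1.sub hlog
    refine this.congr_deriv ?_
    simp [hG1def]
    ring
  have hG1 : ∀ u : ℝ, HasDerivAt G1
      (1 / 4 - (s * Real.exp u * (1 - s + s * Real.exp u) -
        s * Real.exp u * (s * Real.exp u)) / (1 - s + s * Real.exp u) ^ 2) u := by
    intro u
    have hq : HasDerivAt (fun v => s * Real.exp v / (1 - s + s * Real.exp v))
        ((s * Real.exp u * (1 - s + s * Real.exp u) -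
          s * Real.exp u * (s * Real.exp u)) / (1 - s + s * Real.exp u) ^ 2) u :=
      ((Real.hasDerivAt_exp u).const_mul s).div (hD u) (Dpos u).ne'
    have h1 : HasDerivAt (fun v : ℝ => s + v / 4) (1 / 4) u :=
      ((hasDerivAt_id u).div_const 4).const_add s
    exact (h1.sub hq).congr_deriv (by norm_num)
  have hG1nonneg : ∀ u : ℝ,
      0 ≤ 1 / 4 - (s * Real.exp u * (1 - s + s * Real.exp u) -
        s * Real.exp u * (s * Real.exp u)) / (1 - s + s * Real.exp u) ^ 2 := by
    intro u
    have hD2 : (0:ℝ) < (1 - s + s * Real.exp u) ^ 2 := pow_pos (Dpos u) 2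
    rw [sub_nonneg, div_le_iff₀ hD2]
    nlinarith [sq_nonneg (1 - s - s * Real.exp u), Real.exp_pos u]
  have hG1mono : Monotone G1 := by
    apply monotone_of_deriv_nonneg (fun u => (hG1 u).differentiableAt)
    intro u
    rw [(hG1 u).deriv]
    exact hG1nonneg u
  have hG1zero : G1 0 = 0 := by
    simp [hG1def]
  have hGzero : G 0 = 0 := by
    simp [hGdef]
  have hGnonneg : ∀ u : ℝ, 0 ≤ G u := by
    intro u
    rcases le_or_gt 0 u with hu | hu
    · have mono : MonotoneOn G (Set.Ici 0) := by
        apply monotoneOn_of_deriv_nonneg (convex_Ici 0)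
          (fun x _ => (hG x).differentiableAt.continuousAt.continuousWithinAt)
          (fun x _ => (hG x).differentiableAt.differentiableWithinAt)
        intro x hx
        rw [(hG x).deriv]
        have := hG1mono (le_of_lt (by simpa using hx) : (0:ℝ) ≤ x)
        rw [hG1zero] at this
        exact this
      have := mono (Set.self_mem_Ici) hu hu
      rwa [hGzero] at this
    · have anti : AntitoneOn G (Set.Iic 0) := by
        apply antitoneOn_of_deriv_nonpos (convex_Iic 0)
          (fun x _ => (hG x).differentiableAt.continuousAt.continuousWithinAt)
          (fun x _ => (hG x).differentiableAt.differentiableWithinAt)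
        intro x hx
        rw [(hG x).deriv]
        have := hG1mono (le_of_lt (by simpa using hx) : x ≤ 0)
        rw [hG1zero] at this
        exact this
      have := anti hu.le (Set.self_mem_Iic) hu.le
      rwa [hGzero] at this
    
  have upper : Real.log (1 - s + s * Real.exp t) ≤ s * t + t ^ 2 / 8 := by
    have := hGnonneg t
    simp only [hGdef] at this
    linarith
  rw [abs_le]
  constructor <;> linarith

/-- One-block pre-arbitrage gap update map of the partially active AMM built on
a G3M with weights `(θ, 1-θ)`. -/
noncomputable def Psi (θ lam g : ℝ) : ℝ :=
  g - Real.log (1 - lam + lam * Real.exp (θ * g))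
    + Real.log (1 - lam + lam * Real.exp (-(1 - θ) * g))

theorem stmt4 (θ lam : ℝ) (hθ : θ ∈ Set.Ioo (0:ℝ) 1) (hlam : lam ∈ Set.Ioc (0:ℝ) 1) :
    ∀ g : ℝ, |Psi θ lam g - (1 - lam) * g| ≤ g ^ 2 / 8 := by
  intro g
  have h1 := key lam hlam.1 hlam.2 (θ * g)
  have h2 := key lam hlam.1 hlam.2 (-(1 - θ) * g)
  have hsplit : Psi θ lam g - (1 - lam) * g =
      (lam * (θ * g) - Real.log (1 - lam + lam * Real.exp (θ * g))) +
      (Real.log (1 - lam + lam * Real.exp (-(1 - θ) * g)) - lam * (-(1 - θ) * g)) := by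
    simp only [Psi]; ring
  rw [hsplit]
  refine le_trans (abs_add_le _ _) ?_
  rw [abs_sub_comm] at h1
  have hsum : |lam * (θ * g) - Real.log (1 - lam + lam * Real.exp (θ * g))| +
      |Real.log (1 - lam + lam * Real.exp (-(1 - θ) * g)) - lam * (-(1 - θ) * g)|
      ≤ (θ * g) ^ 2 / 8 + (-(1 - θ) * g) ^ 2 / 8 := add_le_add h1 h2
  refine hsum.trans ?_
  nlinarith [mul_nonneg (mul_nonneg hθ.1.le (sub_nonneg.2 hθ.2.le)) (sq_nonneg g)]
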